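/- Let H ⊆ G be a subgroup of finite index [G:H], and let u: P → P be an endomorphism of a finitely generated projective RG-module. Then P, regarded as an RH-module, is finitely generated projective, and tr_{RH}(u) = [G:H] · tr_{RG}(u). -/

import Mathlib

/-- A finite projective coordinate system for a module over a group ring
`MonoidAlgebra R Γ`; it exists iff the module is finitely generated
projective.  The Hattori–Stallings trace is computed with respect to such a
system (and is independent of the choice). -/
structure ProjCoord (R : Type*) [CommRing R] (Γ : Type*) [Group Γ]
    (ι : Type*) [Fintype ι]
    (P : Type*) [AddCommGroup P] [Module (MonoidAlgebra R Γ) P] where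
  x : ι → P
  f : ι → (P →ₗ[MonoidAlgebra R Γ] MonoidAlgebra R Γ)
  dual : ∀ p : P, ∑ i, (f i p) • x i = p

/-- The Hattori–Stallings trace (coefficient at the identity of the sum of
diagonal entries). -/
noncomputable def ProjCoord.tr {R : Type*} [CommRing R] {Γ : Type*} [Group Γ]
    {ι : Type*} [Fintype ι] {P : Type*} [AddCommGroup P]
    [Module (MonoidAlgebra R Γ) P]
    (c : ProjCoord R Γ ι P) (u : P →ₗ[MonoidAlgebra R Γ] P) : R :=
  ∑ i, (c.f i (u (c.x i))).coeff 1

section Aux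

lemma HS.mul_apply_one_comm {R : Type*} [CommRing R] {Γ : Type*} [Group Γ]
    (a b : MonoidAlgebra R Γ) : (a * b).coeff 1 = (b * a).coeff 1 := by
  rw [MonoidAlgebra.coeff_mul_apply_right, MonoidAlgebra.coeff_mul_apply_left]
  refine Finset.sum_congr rfl fun x _ => ?_
  simp [mul_comm]

/-- Independence of the Hattori–Stallings trace of the coordinate system. -/
lemma HS.tr_eq {R : Type*} [CommRing R] {Γ : Type*} [Group Γ]
    {ι : Type*} [Fintype ι] {κ : Type*} [Fintype κ]
    {P : Type*} [AddCommGroup P] [Module (MonoidAlgebra R Γ) P]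
    (c : ProjCoord R Γ ι P) (d : ProjCoord R Γ κ P)
    (u : P →ₗ[MonoidAlgebra R Γ] P) : c.tr u = d.tr u := by
  have hc : ∀ i, c.f i (u (c.x i)) = ∑ k, d.f k (c.x i) * c.f i (u (d.x k)) := by
    intro i
    conv_lhs => rw [← d.dual (c.x i)]
    simp [map_sum, smul_eq_mul]
  have hd : ∀ k, d.f k (u (d.x k)) = ∑ i, c.f i (u (d.x k)) * d.f k (c.x i) := by
    intro k
    conv_lhs => rw [show u (d.x k) = ∑ i, (c.f i (u (d.x k))) • c.x i from (c.dual _).symm]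
    simp [map_sum, smul_eq_mul]
  unfold ProjCoord.tr
  have e1 : ∑ i, (c.f i (u (c.x i))).coeff 1
      = ∑ i, ∑ k, (d.f k (c.x i) * c.f i (u (d.x k))).coeff 1 :=
    Finset.sum_congr rfl fun i _ => by rw [hc i, MonoidAlgebra.coeff_sum]; exact Finsupp.finset_sum_apply _ _ _
  have e2 : ∑ k, (d.f k (u (d.x k))).coeff 1
      = ∑ k, ∑ i, (c.f i (u (d.x k)) * d.f k (c.x i)).coeff 1 :=
    Finset.sum_congr rfl fun k _ => by rw [hd k, MonoidAlgebra.coeff_sum]; exact Finsupp.finset_sum_apply _ _ _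
  rw [e1, e2, Finset.sum_comm]
  exact Finset.sum_congr rfl fun k _ => Finset.sum_congr rfl fun i _ =>
    HS.mul_apply_one_comm _ _

variable {R : Type*} [CommRing R] {G : Type*} [Group G] (H : Subgroup G)

lemma HS.coe_mul_out_injective (s : Quotient (QuotientGroup.rightRel H)) :
    Function.Injective (fun h : ↥H => (h : G) * s.out) := by
  intro a b hab
  exact Subtype.ext (mul_right_cancel hab)

/-- The `RH`-component of an element of `RG` along the right coset `H * s.out`. -/
noncomputable def HS.pi (s : Quotient (QuotientGroup.rightRel H))
    (a : MonoidAlgebra R G) : MonoidAlgebra R (↥H) :=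
  MonoidAlgebra.ofCoeff (Finsupp.comapDomain (fun h : ↥H => (h : G) * s.out) a.coeff
    (HS.coe_mul_out_injective H s).injOn)

lemma HS.pi_apply (s : Quotient (QuotientGroup.rightRel H))
    (a : MonoidAlgebra R G) (h : ↥H) : (HS.pi H s a).coeff h = a.coeff ((h : G) * s.out) := rfl

lemma HS.pi_add (s : Quotient (QuotientGroup.rightRel H))
    (a b : MonoidAlgebra R G) : HS.pi H s (a + b) = HS.pi H s a + HS.pi H s b := by
  ext h; rfl

lemma HS.rho_apply_coe (b : MonoidAlgebra R (↥H)) (h : ↥H) :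
    (MonoidAlgebra.mapDomainRingHom R H.subtype b).coeff ((h : G)) = b.coeff h := by
  rw [MonoidAlgebra.mapDomainRingHom_apply, MonoidAlgebra.coeff_mapDomain]
  exact Finsupp.mapDomain_apply (fun a b hab => Subtype.ext hab) b.coeff h

lemma HS.rho_apply_not_mem (b : MonoidAlgebra R (↥H)) (g : G) (hg : g ∉ H) :
    (MonoidAlgebra.mapDomainRingHom R H.subtype b).coeff g = 0 := by
  rw [MonoidAlgebra.mapDomainRingHom_apply, MonoidAlgebra.coeff_mapDomain]
  exact Finsupp.mapDomain_notin_range b.coeff g (by rintro ⟨h, rfl⟩; exact hg h.2)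

lemma HS.pi_smul (s : Quotient (QuotientGroup.rightRel H))
    (b : MonoidAlgebra R (↥H)) (a : MonoidAlgebra R G) :
    HS.pi H s (MonoidAlgebra.mapDomainRingHom R H.subtype b * a) = b * HS.pi H s a := by
  induction b using MonoidAlgebra.induction_linear with
  | zero => rw [map_zero, zero_mul, zero_mul]
            ext h; rfl
  | add f g hf hg =>
      rw [map_add, add_mul, add_mul, HS.pi_add, hf, hg]
  | single k r =>
      ext h
      have : (MonoidAlgebra.mapDomainRingHom R H.subtype) (MonoidAlgebra.single k r)
          = MonoidAlgebra.single (k : G) r := by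
        simp [MonoidAlgebra.mapDomainRingHom, MonoidAlgebra.mapDomain_single]
      rw [HS.pi_apply, this, MonoidAlgebra.coeff_single_mul_apply, MonoidAlgebra.coeff_single_mul_apply,
        HS.pi_apply]
      simp [mul_assoc]

lemma HS.pi_decomp [Fintype (Quotient (QuotientGroup.rightRel H))]
    (a : MonoidAlgebra R G) :
    ∑ s : Quotient (QuotientGroup.rightRel H),
      MonoidAlgebra.mapDomainRingHom R H.subtype (HS.pi H s a)
        * MonoidAlgebra.of R G s.out = a := by
  ext g
  rw [MonoidAlgebra.coeff_sum, Finsupp.finset_sum_apply]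
  rw [Finset.sum_eq_single (Quotient.mk _ g)]
  · have hmem : g * ((Quotient.mk (QuotientGroup.rightRel H) g).out)⁻¹ ∈ H := by
      have := Quotient.mk_out (s := QuotientGroup.rightRel H) g
      exact (QuotientGroup.rightRel_apply).mp this
    rw [MonoidAlgebra.of_apply, MonoidAlgebra.coeff_mul_single_apply]
    rw [show g * ((Quotient.mk (QuotientGroup.rightRel H) g).out)⁻¹
        = ((⟨_, hmem⟩ : ↥H) : G) from rfl]
    rw [HS.rho_apply_coe, HS.pi_apply]
    simp
  · intro s _ hs
    rw [MonoidAlgebra.of_apply, MonoidAlgebra.coeff_mul_single_apply]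
    rw [HS.rho_apply_not_mem]
    · simp
    · intro hh
      apply hs
      have : (QuotientGroup.rightRel H) s.out g := QuotientGroup.rightRel_apply.mpr hh
      calc s = Quotient.mk _ s.out := (Quotient.out_eq s).symm
        _ = Quotient.mk _ g := Quotient.sound this
  · intro h; exact absurd (Finset.mem_univ _) h

lemma HS.pi_of_mul_one (s : Quotient (QuotientGroup.rightRel H))
    (a : MonoidAlgebra R G) :
    (HS.pi H s (MonoidAlgebra.of R G s.out * a)).coeff 1 = a.coeff 1 := by
  rw [HS.pi_apply, MonoidAlgebra.of_apply, MonoidAlgebra.coeff_single_mul_apply]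
  simp

end Aux

/-- Reindexing a projective coordinate system along an equivalence. -/
def ProjCoord.reindex {R : Type*} [CommRing R] {Γ : Type*} [Group Γ]
    {ι : Type*} [Fintype ι] {κ : Type*} [Fintype κ]
    {P : Type*} [AddCommGroup P] [Module (MonoidAlgebra R Γ) P]
    (c : ProjCoord R Γ κ P) (e : ι ≃ κ) : ProjCoord R Γ ι P where
  x := c.x ∘ e
  f := c.f ∘ e
  dual := fun p => by
    conv_rhs => rw [← c.dual p]
    exact Equiv.sum_comp e fun k => (c.f k p) • c.x k

/-- restriction to a subgroup of finite index.  Let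
`H ⊆ G` have finite index and let `u` be an endomorphism of a finitely
generated projective `RG`-module `P`.  The restriction of `P` to `RH` is
encoded as an `RH`-module `Q` together with an additive bijection `j : P ≃ Q`
intertwining the `RH`-scalar multiplications (via
`mapDomainRingHom R H.subtype`).  Then `Q` is a finitely generated projective
`RH`-module (existence of a finite projective coordinate system), and for every
coordinate system the restricted endomorphism `α^* u = u_H` (characterized by
`u_H ∘ j = j ∘ u`) satisfies `tr_{RH}(α^* u) = [G : H] · tr_{RG}(u)`. -/
theorem hattoriStallings_trace_restriction
    (R : Type*) [CommRing R] (G : Type*) [Group G]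
    (H : Subgroup G) [H.FiniteIndex]
    {ι : Type*} [Fintype ι]
    (P : Type*) [AddCommGroup P] [Module (MonoidAlgebra R G) P]
    (Q : Type*) [AddCommGroup Q] [Module (MonoidAlgebra R (↥H)) Q]
    (j : P ≃+ Q)
    (hj : ∀ (a : MonoidAlgebra R (↥H)) (p : P),
      j ((MonoidAlgebra.mapDomainRingHom R H.subtype a) • p) = a • j p)
    (cG : ProjCoord R G ι P)
    (u : P →ₗ[MonoidAlgebra R G] P) :
    (∃ n : ℕ, Nonempty (ProjCoord R (↥H) (Fin n) Q)) ∧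
      ∀ {κ : Type} [Fintype κ] (cH : ProjCoord R (↥H) κ Q)
        (uH : Q →ₗ[MonoidAlgebra R (↥H)] Q),
        (∀ p : P, uH (j p) = j (u p)) →
        cH.tr uH = (H.index : R) * cG.tr u := by
  classical
  haveI : Finite (Quotient (QuotientGroup.rightRel H)) :=
    Finite.of_equiv _ (QuotientGroup.quotientRightRelEquivQuotientLeftRel H).symm
  haveI : Fintype (Quotient (QuotientGroup.rightRel H)) := Fintype.ofFinite _
  set S := Quotient (QuotientGroup.rightRel H) with hS
  have hj' : ∀ (a : MonoidAlgebra R (↥H)) (q : Q),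
      j.symm (a • q) = (MonoidAlgebra.mapDomainRingHom R H.subtype a) • j.symm q := by
    intro a q
    apply j.injective
    rw [hj, j.apply_symm_apply, j.apply_symm_apply]
  have hcard : Fintype.card S = H.index := by
    rw [← Nat.card_eq_fintype_card, Subgroup.index]
    exact Nat.card_congr (QuotientGroup.quotientRightRelEquivQuotientLeftRel H)
  -- the explicit coordinate system on `Q`
  let c₀ : ProjCoord R (↥H) (ι × S) Q :=
    { x := fun pr => j ((MonoidAlgebra.of R G pr.2.out) • cG.x pr.1)
      f := fun pr =>
        { toFun := fun q => HS.pi H pr.2 (cG.f pr.1 (j.symm q))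
          map_add' := fun q r => by
            simp only [map_add, HS.pi_add]
          map_smul' := fun a q => by
            simp only [RingHom.id_apply, hj' a q, map_smul, smul_eq_mul, HS.pi_smul] }
      dual := fun q => by
        have step : ∀ pr : ι × S,
            (HS.pi H pr.2 (cG.f pr.1 (j.symm q))) •
                j ((MonoidAlgebra.of R G pr.2.out) • cG.x pr.1)
              = j (((MonoidAlgebra.mapDomainRingHom R H.subtype
                  (HS.pi H pr.2 (cG.f pr.1 (j.symm q))))
                    * MonoidAlgebra.of R G pr.2.out) • cG.x pr.1) := by
          intro pr
          rw [← smul_smul, hj]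
        calc ∑ pr : ι × S,
              (HS.pi H pr.2 (cG.f pr.1 (j.symm q))) •
                j ((MonoidAlgebra.of R G pr.2.out) • cG.x pr.1)
            = j (∑ pr : ι × S,
                ((MonoidAlgebra.mapDomainRingHom R H.subtype
                  (HS.pi H pr.2 (cG.f pr.1 (j.symm q))))
                    * MonoidAlgebra.of R G pr.2.out) • cG.x pr.1) := by
              rw [map_sum]
              exact Finset.sum_congr rfl fun pr _ => step pr
          _ = j (j.symm q) := by
              congr 1
              rw [Fintype.sum_prod_type]
              calc ∑ i, ∑ s : S,
                    ((MonoidAlgebra.mapDomainRingHom R H.subtype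
                      (HS.pi H s (cG.f i (j.symm q))))
                        * MonoidAlgebra.of R G s.out) • cG.x i
                  = ∑ i, (cG.f i (j.symm q)) • cG.x i := by
                    refine Finset.sum_congr rfl fun i _ => ?_
                    rw [← Finset.sum_smul, HS.pi_decomp]
                _ = j.symm q := cG.dual _
          _ = q := j.apply_symm_apply q }
  refine ⟨⟨Fintype.card (ι × S), ⟨c₀.reindex (Fintype.equivFin (ι × S)).symm⟩⟩, ?_⟩
  intro κ _ cH uH hcomm
  rw [HS.tr_eq cH c₀]
  have term : ∀ pr : ι × S, (c₀.f pr (uH (c₀.x pr))).coeff 1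
      = (cG.f pr.1 (u (cG.x pr.1))).coeff 1 := by
    intro pr
    show (HS.pi H pr.2 (cG.f pr.1 (j.symm (uH (j ((MonoidAlgebra.of R G pr.2.out) • cG.x pr.1)))))).coeff 1
      = (cG.f pr.1 (u (cG.x pr.1))).coeff 1
    rw [hcomm, j.symm_apply_apply, map_smul, map_smul, smul_eq_mul, HS.pi_of_mul_one]
  calc c₀.tr uH = ∑ pr : ι × S, (cG.f pr.1 (u (cG.x pr.1))).coeff 1 :=
        Finset.sum_congr rfl fun pr _ => term pr
    _ = ∑ i, ∑ _s : S, (cG.f i (u (cG.x i))).coeff 1 := by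
        rw [Fintype.sum_prod_type]
    _ = (H.index : R) * cG.tr u := by
        simp only [Finset.sum_const, Finset.card_univ, nsmul_eq_mul, hcard]
        rw [ProjCoord.tr, Finset.mul_sum]
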